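/- Suppose m := (λ+μ)τ ≥ 2, λ, μ > 0, and P, Q, ε > 0 satisfy e^{−ε} ≤ P/p ≤ e^{ε}, e^{−ε} ≤ (1−P)/(1−p) ≤ e^{ε}, and e^{−ε} ≤ Q/q ≤ e^{ε}, where p := (λ/(λ+μ))(1−e^{−m}) and q := (1/(λ+μ))(1−(m+1)e^{−m})/(1−e^{−m}). Then e^{−2ε}λ ≤ P/Q ≤ e^{2ε}(1 + 2(m+1)e^{−m})λ and e^{−2ε}μ ≤ (1−P)/Q ≤ e^{2ε}(1 + 2(λ/μ + m + 1)e^{−m})μ. -/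

import Mathlib

set_option maxHeartbeats 1000000 in
theorem stmt_6 (lam mu tau ε P Q : ℝ) (hlam : 0 < lam) (hmu : 0 < mu) (htau : 0 < tau)
    (hε : 0 < ε) (hP : 0 < P) (hQ : 0 < Q)
    (m p q : ℝ) (hm : m = (lam + mu) * tau) (hm2 : 2 ≤ m)
    (hp : p = (lam / (lam + mu)) * (1 - Real.exp (-m)))
    (hq : q = (1 / (lam + mu)) * ((1 - (m + 1) * Real.exp (-m)) / (1 - Real.exp (-m))))
    (hP1 : Real.exp (-ε) ≤ P / p) (hP2 : P / p ≤ Real.exp ε)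
    (hP3 : Real.exp (-ε) ≤ (1 - P) / (1 - p)) (hP4 : (1 - P) / (1 - p) ≤ Real.exp ε)
    (hQ1 : Real.exp (-ε) ≤ Q / q) (hQ2 : Q / q ≤ Real.exp ε) :
    Real.exp (-(2 * ε)) * lam ≤ P / Q ∧
      P / Q ≤ Real.exp (2 * ε) * (1 + 2 * (m + 1) * Real.exp (-m)) * lam ∧
      Real.exp (-(2 * ε)) * mu ≤ (1 - P) / Q ∧
      (1 - P) / Q ≤
        Real.exp (2 * ε) * (1 + 2 * (lam / mu + m + 1) * Real.exp (-m)) * mu := by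
  have hS : 0 < lam + mu := by linarith
  set E := Real.exp (-m) with hE
  have hE0 : 0 < E := Real.exp_pos _
  have hE1 : E < 1 := Real.exp_lt_one_iff.mpr (by linarith)
  have hA : 0 < 1 - E := by linarith
  have hEm : E * Real.exp m = 1 := by rw [hE, ← Real.exp_add]; simp
  have ht : (0:ℝ) ≤ m - 2 := by linarith
  have hK : (1 + m/4)^4 ≤ Real.exp m := by
    have h1 : m/4 + 1 ≤ Real.exp (m/4) := Real.add_one_le_exp _
    have h3 : (m/4 + 1)^4 ≤ (Real.exp (m/4))^4 :=
      pow_le_pow_left₀ (by linarith) h1 4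
    have h4 : (Real.exp (m/4))^4 = Real.exp m := by
      rw [← Real.exp_nat_mul]; norm_num; ring_nf
    calc (1 + m/4)^4 = (m/4 + 1)^4 := by ring
      _ ≤ (Real.exp (m/4))^4 := h3
      _ = Real.exp m := h4
  have hme : m + 1 < Real.exp m := by
    have := Real.add_one_lt_exp (by linarith : m ≠ 0)
    linarith
  have hD : (m+1)*E < 1 := by nlinarith [hme, hE0, hEm]
  have hDpos : 0 < 1 - (m+1)*E := by linarith
  -- numeric facts
  have fB : (1 + 2*(m+1)^2) * E ≤ m + 3 := by
    have h0 : (1 + 2*(m+1)^2) ≤ (m+3) * ((1+m/4)^4) := by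
      nlinarith [pow_nonneg ht 2, pow_nonneg ht 3, pow_nonneg ht 4, pow_nonneg ht 5]
    have h1 : (1 + 2*(m+1)^2) ≤ (m+3) * Real.exp m :=
      h0.trans (mul_le_mul_of_nonneg_left hK (by linarith))
    nlinarith [mul_le_mul_of_nonneg_right h1 hE0.le, hEm]
  have fC : (2*m+1) * E ≤ 1 := by
    have h0 : (2*m+1 : ℝ) ≤ (1+m/4)^4 := by
      nlinarith [pow_nonneg ht 2, pow_nonneg ht 3, pow_nonneg ht 4]
    have h1 : (2*m+1 : ℝ) ≤ Real.exp m := h0.trans hK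
    nlinarith [mul_le_mul_of_nonneg_right h1 hE0.le, hEm]
  have fD : 2*(m+1)^2 * E ≤ m + 2 := by
    have h0 : 2*(m+1)^2 ≤ (m+2) * ((1+m/4)^4) := by
      nlinarith [pow_nonneg ht 2, pow_nonneg ht 3, pow_nonneg ht 4, pow_nonneg ht 5]
    have h1 : 2*(m+1)^2 ≤ (m+2) * Real.exp m :=
      h0.trans (mul_le_mul_of_nonneg_left hK (by linarith))
    nlinarith [mul_le_mul_of_nonneg_right h1 hE0.le, hEm]
  -- positivity of p, q
  have hp0 : 0 < p := by
    rw [hp]; exact mul_pos (div_pos hlam hS) hA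
  have hq0 : 0 < q := by
    rw [hq]; exact mul_pos (by positivity) (div_pos hDpos hA)
  have hp1 : p < 1 := by
    rw [hp]
    have h1 : lam / (lam + mu) < 1 := (div_lt_one hS).mpr (by linarith)
    have h2 : 0 < lam / (lam+mu) := div_pos hlam hS
    nlinarith [hE0]
  have h1p : 0 < 1 - p := by linarith
  -- product identities
  have hqA : q * ((1 - E) * (lam + mu)) = 1 - (m+1)*E := by
    have hA' : (1 - E) ≠ 0 := ne_of_gt hA
    have hS' : (lam + mu) ≠ 0 := ne_of_gt hS
    rw [hq]; field_simp
  have hpA : p * (lam + mu) = lam * (1 - E) := by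
    have hS' : (lam + mu) ≠ 0 := ne_of_gt hS
    rw [hp]; field_simp
  have hAS : 0 < (1-E) * (lam+mu) := mul_pos hA hS
  have h1pA : (1-p) * ((1-E)*(lam+mu)) = (mu + lam*E) * (1-E) := by
    have : (1-p) * ((1-E)*(lam+mu)) = ((lam+mu) - p*(lam+mu)) * (1-E) := by ring
    rw [this, hpA]; ring
  -- core inequalities
  have i1 : lam * q ≤ p := by
    have hd2 : 1 - (m+1)*E ≤ (1-E)^2 := by
      nlinarith [mul_nonneg (by linarith : (0:ℝ) ≤ m - 1) hE0.le, sq_nonneg E]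
    have h2 : lam * q * ((1-E)*(lam+mu)) ≤ p * ((1-E)*(lam+mu)) := by
      calc lam*q*((1-E)*(lam+mu)) = lam * (q*((1-E)*(lam+mu))) := by ring
        _ = lam * (1-(m+1)*E) := by rw [hqA]
        _ ≤ lam * ((1-E)^2) := mul_le_mul_of_nonneg_left hd2 hlam.le
        _ = (p*(lam+mu))*(1-E) := by rw [hpA]; ring
        _ = p * ((1-E)*(lam+mu)) := by ring
    exact le_of_mul_le_mul_right h2 hAS
  have i2 : p ≤ (1 + 2*(m+1)*E) * (lam * q) := by
    have hd2 : (1-E)^2 ≤ (1 + 2*(m+1)*E) * (1 - (m+1)*E) := by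
      nlinarith [mul_le_mul_of_nonneg_right fB hE0.le]
    have h2 : p * ((1-E)*(lam+mu)) ≤ (1 + 2*(m+1)*E) * (lam * q) * ((1-E)*(lam+mu)) := by
      calc p * ((1-E)*(lam+mu)) = (p*(lam+mu))*(1-E) := by ring
        _ = lam * ((1-E)^2) := by rw [hpA]; ring
        _ ≤ lam * ((1 + 2*(m+1)*E) * (1 - (m+1)*E)) := mul_le_mul_of_nonneg_left hd2 hlam.le
        _ = (1 + 2*(m+1)*E) * lam * (q*((1-E)*(lam+mu))) := by rw [hqA]; ring
        _ = (1 + 2*(m+1)*E) * (lam * q) * ((1-E)*(lam+mu)) := by ring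
    exact le_of_mul_le_mul_right h2 hAS
  have i3 : mu * q ≤ 1 - p := by
    have hd2 : mu * (1 - (m+1)*E) ≤ (mu + lam*E) * (1-E) := by
      nlinarith [mul_nonneg (mul_nonneg hlam.le hE0.le) hA.le,
        mul_nonneg (mul_nonneg (by linarith : (0:ℝ) ≤ m) hmu.le) hE0.le]
    have h2 : mu * q * ((1-E)*(lam+mu)) ≤ (1-p) * ((1-E)*(lam+mu)) := by
      calc mu*q*((1-E)*(lam+mu)) = mu * (q*((1-E)*(lam+mu))) := by ring
        _ = mu * (1-(m+1)*E) := by rw [hqA]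
        _ ≤ (mu + lam*E) * (1-E) := hd2
        _ = (1-p) * ((1-E)*(lam+mu)) := h1pA.symm
    exact le_of_mul_le_mul_right h2 hAS
  have i4 : 1 - p ≤ (1 + 2*(lam/mu + m + 1)*E) * (mu * q) := by
    have hd2 : (mu + lam*E) * (1-E) ≤ (mu + 2*(lam + (m+1)*mu)*E) * (1 - (m+1)*E) := by
      nlinarith [mul_le_mul_of_nonneg_right fC (mul_nonneg hlam.le hE0.le),
        mul_le_mul_of_nonneg_right fD (mul_nonneg hmu.le hE0.le)]
    have hc : (1 + 2*(lam/mu + m + 1)*E) * mu = mu + 2*(lam + (m+1)*mu)*E := by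
      have hmu' : mu ≠ 0 := ne_of_gt hmu
      have hdm : lam/mu*mu = lam := div_mul_cancel₀ lam hmu'
      linear_combination (2*E)*hdm
    have h2 : (1-p) * ((1-E)*(lam+mu)) ≤
        (1 + 2*(lam/mu + m + 1)*E) * (mu * q) * ((1-E)*(lam+mu)) := by
      calc (1-p) * ((1-E)*(lam+mu)) = (mu + lam*E) * (1-E) := h1pA
        _ ≤ (mu + 2*(lam + (m+1)*mu)*E) * (1 - (m+1)*E) := hd2
        _ = ((1 + 2*(lam/mu + m + 1)*E) * mu) * (q*((1-E)*(lam+mu))) := by rw [hc, hqA]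
        _ = (1 + 2*(lam/mu + m + 1)*E) * (mu * q) * ((1-E)*(lam+mu)) := by ring
    exact le_of_mul_le_mul_right h2 hAS
  -- bounds from the multiplicative estimates
  have hQhi : Q ≤ Real.exp ε * q := by
    have := (div_le_iff₀ hq0).mp hQ2; linarith
  have hQlo : Real.exp (-ε) * q ≤ Q := by
    have := (le_div_iff₀ hq0).mp hQ1; linarith
  have hPlo : Real.exp (-ε) * p ≤ P := by
    have := (le_div_iff₀ hp0).mp hP1; linarith
  have hPhi : P ≤ Real.exp ε * p := by
    have := (div_le_iff₀ hp0).mp hP2; linarith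
  have h1Plo : Real.exp (-ε) * (1-p) ≤ 1 - P := by
    have := (le_div_iff₀ h1p).mp hP3; linarith
  have h1Phi : 1 - P ≤ Real.exp ε * (1-p) := by
    have := (div_le_iff₀ h1p).mp hP4; linarith
  have hee : Real.exp (-(2*ε)) * Real.exp ε = Real.exp (-ε) := by
    rw [← Real.exp_add]; ring_nf
  have he2 : Real.exp ε = Real.exp (2*ε) * Real.exp (-ε) := by
    rw [← Real.exp_add]; ring_nf
  have hεp := Real.exp_pos ε
  have hεn := Real.exp_pos (-ε)
  have hε2p := Real.exp_pos (2*ε)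
  refine ⟨?_, ?_, ?_, ?_⟩
  · rw [le_div_iff₀ hQ]
    calc Real.exp (-(2*ε)) * lam * Q
        ≤ Real.exp (-(2*ε)) * lam * (Real.exp ε * q) :=
          mul_le_mul_of_nonneg_left hQhi (by positivity)
      _ = (Real.exp (-(2*ε)) * Real.exp ε) * (lam * q) := by ring
      _ = Real.exp (-ε) * (lam * q) := by rw [hee]
      _ ≤ Real.exp (-ε) * p := mul_le_mul_of_nonneg_left i1 hεn.le
      _ ≤ P := hPlo
  · rw [div_le_iff₀ hQ]
    have hone : (0:ℝ) ≤ 1 + 2*(m+1)*E := by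
      have h := mul_nonneg (by linarith : (0:ℝ) ≤ m+1) hE0.le
      linarith
    calc P ≤ Real.exp ε * p := hPhi
      _ ≤ Real.exp ε * ((1 + 2*(m+1)*E) * (lam * q)) :=
          mul_le_mul_of_nonneg_left i2 hεp.le
      _ = (Real.exp (2*ε) * (1 + 2*(m+1)*E) * lam) * (Real.exp (-ε) * q) := by
          rw [he2]; ring
      _ ≤ (Real.exp (2*ε) * (1 + 2*(m+1)*E) * lam) * Q := by
          apply mul_le_mul_of_nonneg_left hQlo
          exact mul_nonneg (mul_nonneg hε2p.le hone) hlam.le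
  · rw [le_div_iff₀ hQ]
    calc Real.exp (-(2*ε)) * mu * Q
        ≤ Real.exp (-(2*ε)) * mu * (Real.exp ε * q) :=
          mul_le_mul_of_nonneg_left hQhi (by positivity)
      _ = (Real.exp (-(2*ε)) * Real.exp ε) * (mu * q) := by ring
      _ = Real.exp (-ε) * (mu * q) := by rw [hee]
      _ ≤ Real.exp (-ε) * (1-p) := mul_le_mul_of_nonneg_left i3 hεn.le
      _ ≤ 1 - P := h1Plo
  · rw [div_le_iff₀ hQ]
    have hone : (0:ℝ) ≤ 1 + 2*(lam/mu + m + 1)*E := by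
      have h := mul_nonneg (by positivity : (0:ℝ) ≤ lam/mu + m + 1) hE0.le
      linarith
    calc 1 - P ≤ Real.exp ε * (1-p) := h1Phi
      _ ≤ Real.exp ε * ((1 + 2*(lam/mu + m + 1)*E) * (mu * q)) :=
          mul_le_mul_of_nonneg_left i4 hεp.le
      _ = (Real.exp (2*ε) * (1 + 2*(lam/mu + m + 1)*E) * mu) * (Real.exp (-ε) * q) := by
          rw [he2]; ring
      _ ≤ (Real.exp (2*ε) * (1 + 2*(lam/mu + m + 1)*E) * mu) * Q := by
          apply mul_le_mul_of_nonneg_left hQlo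
          exact mul_nonneg (mul_nonneg hε2p.le hone) hmu.le
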